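/- Let κ ∈ ℝ, M ∈ ℕ, let Ω ⊆ ℝ² be open, (x*,y*) ∈ Ω, and let u : ℝ² → ℂ be (M+1)-times continuously differentiable on Ω. Set f := Δu + κ²u on Ω (where Δ = ∂²/∂x² + ∂²/∂y²). Then for every pair (m,n) ∈ ℕ×ℕ with (n,m) ∈ Λ_{M+1}^2 (i.e. n ≥ 2 and m+n ≤ M+1): u^{(m,n)} = (−1)^{⌊n/2⌋} Σ_{q=0}^{⌊n/2⌋} C(⌊n/2⌋,q) κ^{2q} u^{(2⌊n/2⌋+m−2q, odd(n))} + Σ_{q=1}^{⌊n/2⌋} Σ_{j=0}^{q−1} (−1)^{q−1} C(q−1,j) κ^{2(q−j−1)} f^{(m+2j, n−2q)}, where all derivatives are evaluated at (x*,y*) and C(a,b) is the binomial coefficient. -/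

import Mathlib

open scoped BigOperators
open Complex

/-- The index set `Λ_N = {(m,n) ∈ ℕ×ℕ : m+n ≤ N}`. -/
def Lam (N : ℕ) : Finset (ℕ × ℕ) :=
  (Finset.range (N + 1) ×ˢ Finset.range (N + 1)).filter (fun p => p.1 + p.2 ≤ N)

/-- `Λ_N^1 = {(m,n) ∈ Λ_N : m ≤ 1}`. -/
def Lam1 (N : ℕ) : Finset (ℕ × ℕ) := (Lam N).filter (fun p => p.1 ≤ 1)

/-- `Λ_N^2 = Λ_N \ Λ_N^1 = {(m,n) ∈ Λ_N : m ≥ 2}`. -/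
def Lam2 (N : ℕ) : Finset (ℕ × ℕ) := (Lam N).filter (fun p => 2 ≤ p.1)

/-- Mixed partial derivative `u^{(m,n)} = ∂^{m+n} u / ∂x^m ∂y^n` at `(x,y)`. -/
noncomputable def pd (u : ℝ × ℝ → ℂ) (m n : ℕ) (x y : ℝ) : ℂ :=
  iteratedDeriv m (fun s => iteratedDeriv n (fun t => u (s, t)) y) x

/-- `f = Δu + κ² u`. -/
noncomputable def helm (κ : ℝ) (u : ℝ × ℝ → ℂ) : ℝ × ℝ → ℂ :=
  fun p => pd u 2 0 p.1 p.2 + pd u 0 2 p.1 p.2 + (κ : ℂ) ^ 2 * u p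

/-- The polynomial `G_{N,m,n}(x,y)`; the sum is empty (0) when `m+n > N`. -/
noncomputable def Gpoly (κ : ℝ) (N m n : ℕ) (x y : ℂ) : ℂ :=
  if m + n ≤ N then
    ∑ p ∈ Finset.range ((N - m - n) / 2 + 1),
      ∑ ℓ ∈ Finset.Icc p (p + n / 2),
        (-1 : ℂ) ^ ℓ * (Nat.choose ℓ p : ℂ) * (κ : ℂ) ^ (2 * p) *
          x ^ (m + 2 * ℓ) * y ^ (n + 2 * p - 2 * ℓ) /
          ((Nat.factorial (m + 2 * ℓ) : ℂ) * (Nat.factorial (n + 2 * p - 2 * ℓ) : ℂ))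
  else 0

/-- The polynomial `H_{N,m,n}(x,y)`; the sum is empty (0) when `m+n+2 > N`. -/
noncomputable def Hpoly (κ : ℝ) (N m n : ℕ) (x y : ℂ) : ℂ :=
  if m + n + 2 ≤ N then
    ∑ p ∈ Finset.range ((N - 2 - m - n) / 2 + 1),
      ∑ ℓ ∈ Finset.Icc (p + 1) (p + n / 2 + 1),
        (-1 : ℂ) ^ (ℓ - 1) * (Nat.choose (ℓ - 1) p : ℂ) * (κ : ℂ) ^ (2 * p) *
          x ^ (m + 2 * ℓ) * y ^ (2 * p + n + 2 - 2 * ℓ) /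
          ((Nat.factorial (m + 2 * ℓ) : ℂ) * (Nat.factorial (2 * p + n + 2 - 2 * ℓ) : ℂ))
  else 0

open Topology

noncomputable def pdx (g : ℝ × ℝ → ℂ) : ℝ × ℝ → ℂ := fun p => fderiv ℝ g p (1, 0)
noncomputable def pdy (g : ℝ × ℝ → ℂ) : ℝ × ℝ → ℂ := fun p => fderiv ℝ g p (0, 1)

lemma hasDerivAt_slice_x {g : ℝ × ℝ → ℂ} {x y : ℝ} (hg : DifferentiableAt ℝ g (x, y)) :
    HasDerivAt (fun s => g (s, y)) (pdx g (x, y)) x := by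
  have h1 : HasDerivAt (fun s : ℝ => (s, y)) ((1 : ℝ), (0 : ℝ)) x := by
    simpa using ((hasDerivAt_id x).prodMk (hasDerivAt_const x y))
  exact hg.hasFDerivAt.comp_hasDerivAt x h1

lemma hasDerivAt_slice_y {g : ℝ × ℝ → ℂ} {x y : ℝ} (hg : DifferentiableAt ℝ g (x, y)) :
    HasDerivAt (fun t => g (x, t)) (pdy g (x, y)) y := by
  have h1 : HasDerivAt (fun t : ℝ => (x, t)) ((0 : ℝ), (1 : ℝ)) y := by
    simpa using ((hasDerivAt_const y x).prodMk (hasDerivAt_id y))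
  exact hg.hasFDerivAt.comp_hasDerivAt y h1

lemma contDiffOn_pdx {k : ℕ} {g : ℝ × ℝ → ℂ} {Ω : Set (ℝ × ℝ)} (hΩ : IsOpen Ω)
    (hg : ContDiffOn ℝ (k + 1 : ℕ) g Ω) : ContDiffOn ℝ (k : ℕ) (pdx g) Ω := by
  have h1 : ContDiffOn ℝ (k : ℕ) (fderiv ℝ g) Ω :=
    hg.fderiv_of_isOpen hΩ (by exact_mod_cast le_refl _)
  exact (ContinuousLinearMap.apply ℝ ℂ ((1 : ℝ), (0 : ℝ))).contDiff.comp_contDiffOn h1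

lemma contDiffOn_pdy {k : ℕ} {g : ℝ × ℝ → ℂ} {Ω : Set (ℝ × ℝ)} (hΩ : IsOpen Ω)
    (hg : ContDiffOn ℝ (k + 1 : ℕ) g Ω) : ContDiffOn ℝ (k : ℕ) (pdy g) Ω := by
  have h1 : ContDiffOn ℝ (k : ℕ) (fderiv ℝ g) Ω :=
    hg.fderiv_of_isOpen hΩ (by exact_mod_cast le_refl _)
  exact (ContinuousLinearMap.apply ℝ ℂ ((0 : ℝ), (1 : ℝ))).contDiff.comp_contDiffOn h1

lemma contDiffOn_pdy_iter {Ω : Set (ℝ × ℝ)} (hΩ : IsOpen Ω) (j k : ℕ) :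
    ∀ {g : ℝ × ℝ → ℂ}, ContDiffOn ℝ (j + k : ℕ) g Ω → ContDiffOn ℝ (k : ℕ) (pdy^[j] g) Ω := by
  induction j with
  | zero => intro g hg; simpa using hg
  | succ j ih =>
    intro g hg
    rw [Function.iterate_succ_apply]
    refine ih (contDiffOn_pdy hΩ ?_)
    rw [show j + 1 + k = j + k + 1 from by omega] at hg
    exact hg

lemma contDiffOn_pdx_iter {Ω : Set (ℝ × ℝ)} (hΩ : IsOpen Ω) (j k : ℕ) :
    ∀ {g : ℝ × ℝ → ℂ}, ContDiffOn ℝ (j + k : ℕ) g Ω → ContDiffOn ℝ (k : ℕ) (pdx^[j] g) Ω := by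
  induction j with
  | zero => intro g hg; simpa using hg
  | succ j ih =>
    intro g hg
    rw [Function.iterate_succ_apply]
    refine ih (contDiffOn_pdx hΩ ?_)
    rw [show j + 1 + k = j + k + 1 from by omega] at hg
    exact hg

lemma pdx_congr_on {g h : ℝ × ℝ → ℂ} {Ω : Set (ℝ × ℝ)} (hΩ : IsOpen Ω)
    (he : Set.EqOn g h Ω) : Set.EqOn (pdx g) (pdx h) Ω := by
  intro p hp
  have : fderiv ℝ g p = fderiv ℝ h p :=
    Filter.EventuallyEq.fderiv_eq (Filter.eventuallyEq_of_mem (hΩ.mem_nhds hp) he)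
  simp [pdx, this]

lemma pdy_congr_on {g h : ℝ × ℝ → ℂ} {Ω : Set (ℝ × ℝ)} (hΩ : IsOpen Ω)
    (he : Set.EqOn g h Ω) : Set.EqOn (pdy g) (pdy h) Ω := by
  intro p hp
  have : fderiv ℝ g p = fderiv ℝ h p :=
    Filter.EventuallyEq.fderiv_eq (Filter.eventuallyEq_of_mem (hΩ.mem_nhds hp) he)
  simp [pdy, this]

lemma pdy_iter_congr_on {g h : ℝ × ℝ → ℂ} {Ω : Set (ℝ × ℝ)} (hΩ : IsOpen Ω)
    (he : Set.EqOn g h Ω) (b : ℕ) : Set.EqOn (pdy^[b] g) (pdy^[b] h) Ω := by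
  induction b with
  | zero => simpa using he
  | succ b ih =>
    rw [Function.iterate_succ_apply', Function.iterate_succ_apply']
    exact pdy_congr_on hΩ ih

lemma pdx_iter_congr_on {g h : ℝ × ℝ → ℂ} {Ω : Set (ℝ × ℝ)} (hΩ : IsOpen Ω)
    (he : Set.EqOn g h Ω) (b : ℕ) : Set.EqOn (pdx^[b] g) (pdx^[b] h) Ω := by
  induction b with
  | zero => simpa using he
  | succ b ih =>
    rw [Function.iterate_succ_apply', Function.iterate_succ_apply']
    exact pdx_congr_on hΩ ih

lemma clairaut {g : ℝ × ℝ → ℂ} {Ω : Set (ℝ × ℝ)} (hΩ : IsOpen Ω)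
    (hg : ContDiffOn ℝ (2 : ℕ) g Ω) : Set.EqOn (pdx (pdy g)) (pdy (pdx g)) Ω := by
  intro p hp
  have hf' : ContDiffOn ℝ (1 : ℕ) (fderiv ℝ g) Ω :=
    hg.fderiv_of_isOpen hΩ (by exact_mod_cast le_refl _)
  have hdiff : DifferentiableAt ℝ (fderiv ℝ g) p :=
    (hf'.differentiableOn (by norm_num) p hp).differentiableAt (hΩ.mem_nhds hp)
  have hev : ∀ᶠ q in 𝓝 p, HasFDerivAt g (fderiv ℝ g q) q := by
    filter_upwards [hΩ.mem_nhds hp] with q hq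
    exact ((hg.differentiableOn (by norm_num) q hq).differentiableAt (hΩ.mem_nhds hq)).hasFDerivAt
  have hsymm := second_derivative_symmetric_of_eventually hev hdiff.hasFDerivAt
  have h1 : HasFDerivAt (pdy g)
      ((ContinuousLinearMap.apply ℝ ℂ ((0 : ℝ), (1 : ℝ))).comp (fderiv ℝ (fderiv ℝ g) p)) p :=
    (ContinuousLinearMap.apply ℝ ℂ ((0 : ℝ), (1 : ℝ))).hasFDerivAt.comp p hdiff.hasFDerivAt
  have h2 : HasFDerivAt (pdx g)
      ((ContinuousLinearMap.apply ℝ ℂ ((1 : ℝ), (0 : ℝ))).comp (fderiv ℝ (fderiv ℝ g) p)) p :=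
    (ContinuousLinearMap.apply ℝ ℂ ((1 : ℝ), (0 : ℝ))).hasFDerivAt.comp p hdiff.hasFDerivAt
  show fderiv ℝ (pdy g) p (1, 0) = fderiv ℝ (pdx g) p (0, 1)
  rw [h1.fderiv, h2.fderiv]
  simpa using hsymm ((1:ℝ), (0:ℝ)) ((0:ℝ), (1:ℝ))

/-- swap: `pdy^[b] (pdx g) = pdx (pdy^[b] g)` on `Ω` for `g` of class `C^{b+1}`. -/
lemma swap_iter {Ω : Set (ℝ × ℝ)} (hΩ : IsOpen Ω) (b : ℕ) :
    ∀ {g : ℝ × ℝ → ℂ}, ContDiffOn ℝ (b + 1 : ℕ) g Ω →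
      Set.EqOn (pdy^[b] (pdx g)) (pdx (pdy^[b] g)) Ω := by
  induction b with
  | zero => intro g _; simp [Set.EqOn]
  | succ b ih =>
    intro g hg
    have hg' : ContDiffOn ℝ (b + 1 : ℕ) g Ω := hg.of_le (by exact_mod_cast Nat.le_succ _)
    have h1 : Set.EqOn (pdy^[b + 1] (pdx g)) (pdy (pdx (pdy^[b] g))) Ω := by
      rw [Function.iterate_succ_apply']
      exact pdy_congr_on hΩ (ih hg')
    have hsm : ContDiffOn ℝ (2 : ℕ) (pdy^[b] g) Ω := by
      refine contDiffOn_pdy_iter hΩ b 2 ?_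
      rw [show b + 2 = b + 1 + 1 from rfl]
      exact hg
    intro p hp
    rw [h1 hp, ← clairaut hΩ hsm hp, Function.iterate_succ_apply']

lemma iteratedDeriv_congr_open {f g : ℝ → ℂ} {U : Set ℝ} (hU : IsOpen U)
    (h : Set.EqOn f g U) (m : ℕ) : Set.EqOn (iteratedDeriv m f) (iteratedDeriv m g) U := by
  induction m with
  | zero => simpa [iteratedDeriv_zero] using h
  | succ m ih =>
    intro x hx
    rw [iteratedDeriv_succ, iteratedDeriv_succ]
    exact Filter.EventuallyEq.deriv_eq (Filter.eventuallyEq_of_mem (hU.mem_nhds hx) ih)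

lemma slice_y_iter {Ω : Set (ℝ × ℝ)} (hΩ : IsOpen Ω) (N : ℕ) {u : ℝ × ℝ → ℂ}
    (hu : ContDiffOn ℝ (N : ℕ) u Ω) (n : ℕ) (hn : n ≤ N) :
    ∀ x y, (x, y) ∈ Ω → iteratedDeriv n (fun t => u (x, t)) y = pdy^[n] u (x, y) := by
  induction n with
  | zero => intro x y _; simp [iteratedDeriv_zero]
  | succ n ih =>
    intro x y hxy
    rw [iteratedDeriv_succ]
    have hU : IsOpen {t : ℝ | (x, t) ∈ Ω} := hΩ.preimage (by fun_prop)
    have hev : (fun t => iteratedDeriv n (fun t' => u (x, t')) t) =ᶠ[𝓝 y]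
        (fun t => pdy^[n] u (x, t)) := by
      filter_upwards [hU.mem_nhds (by exact hxy)] with t ht
      exact ih (Nat.le_of_succ_le hn) x t ht
    rw [hev.deriv_eq]
    have hdiff : DifferentiableAt ℝ (pdy^[n] u) (x, y) := by
      have h1 : ContDiffOn ℝ (1 : ℕ) (pdy^[n] u) Ω :=
        contDiffOn_pdy_iter hΩ n 1 (hu.of_le (by exact_mod_cast hn))
      exact (h1.differentiableOn (by norm_num) _ hxy).differentiableAt
        (hΩ.mem_nhds hxy)
    rw [(hasDerivAt_slice_y hdiff).deriv, show pdy (pdy^[n] u) (x, y) = pdy^[n + 1] u (x, y) from congrFun (Function.iterate_succ_apply' pdy n u).symm (x, y)]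

lemma slice_x_iter {Ω : Set (ℝ × ℝ)} (hΩ : IsOpen Ω) (N : ℕ) {u : ℝ × ℝ → ℂ}
    (hu : ContDiffOn ℝ (N : ℕ) u Ω) (n : ℕ) (hn : n ≤ N) :
    ∀ x y, (x, y) ∈ Ω → iteratedDeriv n (fun s => u (s, y)) x = pdx^[n] u (x, y) := by
  induction n with
  | zero => intro x y _; simp [iteratedDeriv_zero]
  | succ n ih =>
    intro x y hxy
    rw [iteratedDeriv_succ]
    have hU : IsOpen {s : ℝ | (s, y) ∈ Ω} := hΩ.preimage (by fun_prop)
    have hev : (fun s => iteratedDeriv n (fun s' => u (s', y)) s) =ᶠ[𝓝 x]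
        (fun s => pdx^[n] u (s, y)) := by
      filter_upwards [hU.mem_nhds (by exact hxy)] with s hs
      exact ih (Nat.le_of_succ_le hn) s y hs
    rw [hev.deriv_eq]
    have hdiff : DifferentiableAt ℝ (pdx^[n] u) (x, y) := by
      have h1 : ContDiffOn ℝ (1 : ℕ) (pdx^[n] u) Ω :=
        contDiffOn_pdx_iter hΩ n 1 (hu.of_le (by exact_mod_cast hn))
      exact (h1.differentiableOn (by norm_num) _ hxy).differentiableAt
        (hΩ.mem_nhds hxy)
    rw [(hasDerivAt_slice_x hdiff).deriv, show pdx (pdx^[n] u) (x, y) = pdx^[n + 1] u (x, y) from congrFun (Function.iterate_succ_apply' pdx n u).symm (x, y)]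

lemma pd_eq {Ω : Set (ℝ × ℝ)} (hΩ : IsOpen Ω) {u : ℝ × ℝ → ℂ} {N : ℕ}
    (hu : ContDiffOn ℝ (N : ℕ) u Ω) (m n : ℕ) (hmn : m + n ≤ N) :
    ∀ x y, (x, y) ∈ Ω → pd u m n x y = pdx^[m] (pdy^[n] u) (x, y) := by
  intro x y hxy
  unfold pd
  have hU : IsOpen {s : ℝ | (s, y) ∈ Ω} := hΩ.preimage (by fun_prop)
  have h1 : Set.EqOn (fun s => iteratedDeriv n (fun t => u (s, t)) y)
      (fun s => pdy^[n] u (s, y)) {s : ℝ | (s, y) ∈ Ω} := by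
    intro s hs
    exact slice_y_iter hΩ N hu n (by omega) s y hs
  rw [iteratedDeriv_congr_open hU h1 m (by exact hxy)]
  have hv : ContDiffOn ℝ (m : ℕ) (pdy^[n] u) Ω :=
    contDiffOn_pdy_iter hΩ n m (hu.of_le (by exact_mod_cast by omega))
  exact slice_x_iter hΩ m hv m le_rfl x y hxy

lemma pdy_lin {g h k : ℝ × ℝ → ℂ} {c : ℂ} {Ω : Set (ℝ × ℝ)} (hΩ : IsOpen Ω)
    (hg : DifferentiableOn ℝ g Ω) (hh : DifferentiableOn ℝ h Ω)
    (hk : DifferentiableOn ℝ k Ω) :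
    Set.EqOn (pdy (fun q => g q + h q + c * k q))
      (fun q => pdy g q + pdy h q + c * pdy k q) Ω := by
  intro p hp
  have hg' := (hg p hp).differentiableAt (hΩ.mem_nhds hp)
  have hh' := (hh p hp).differentiableAt (hΩ.mem_nhds hp)
  have hk' := (hk p hp).differentiableAt (hΩ.mem_nhds hp)
  have H : HasFDerivAt (fun q => g q + h q + c * k q)
      (fderiv ℝ g p + fderiv ℝ h p + c • fderiv ℝ k p) p := by
    have := (hg'.hasFDerivAt.add hh'.hasFDerivAt).add (hk'.hasFDerivAt.const_smul c)
    exact this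
  show fderiv ℝ _ p (0,1) = _
  rw [H.fderiv]
  simp [pdy, smul_eq_mul]

lemma pdx_lin {g h k : ℝ × ℝ → ℂ} {c : ℂ} {Ω : Set (ℝ × ℝ)} (hΩ : IsOpen Ω)
    (hg : DifferentiableOn ℝ g Ω) (hh : DifferentiableOn ℝ h Ω)
    (hk : DifferentiableOn ℝ k Ω) :
    Set.EqOn (pdx (fun q => g q + h q + c * k q))
      (fun q => pdx g q + pdx h q + c * pdx k q) Ω := by
  intro p hp
  have hg' := (hg p hp).differentiableAt (hΩ.mem_nhds hp)
  have hh' := (hh p hp).differentiableAt (hΩ.mem_nhds hp)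
  have hk' := (hk p hp).differentiableAt (hΩ.mem_nhds hp)
  have H : HasFDerivAt (fun q => g q + h q + c * k q)
      (fderiv ℝ g p + fderiv ℝ h p + c • fderiv ℝ k p) p := by
    have := (hg'.hasFDerivAt.add hh'.hasFDerivAt).add (hk'.hasFDerivAt.const_smul c)
    exact this
  show fderiv ℝ _ p (1,0) = _
  rw [H.fderiv]
  simp [pdx, smul_eq_mul]

lemma pdy_iter_lin {Ω : Set (ℝ × ℝ)} (hΩ : IsOpen Ω) (c : ℂ) (b : ℕ) :
    ∀ {g h k : ℝ × ℝ → ℂ}, ContDiffOn ℝ (b : ℕ) g Ω → ContDiffOn ℝ (b : ℕ) h Ω →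
      ContDiffOn ℝ (b : ℕ) k Ω →
      Set.EqOn (pdy^[b] (fun q => g q + h q + c * k q))
        (fun q => pdy^[b] g q + pdy^[b] h q + c * pdy^[b] k q) Ω := by
  induction b with
  | zero => intro g h k _ _ _; simp [Set.EqOn]
  | succ b ih =>
    intro g h k hg hh hk
    have one_le : ((b : ℕ) + 1 : ℕ) ≠ (0 : WithTop ℕ∞) := by exact_mod_cast Nat.succ_ne_zero b
    have h1 : Set.EqOn (pdy^[b + 1] (fun q => g q + h q + c * k q))
        (pdy^[b] (fun q => pdy g q + pdy h q + c * pdy k q)) Ω := by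
      rw [Function.iterate_succ_apply]
      exact fun p hp => (congrFun (rfl : pdy^[b] (pdy fun q => g q + h q + c * k q) = _) p).trans
        ((pdy_iter_congr_on hΩ (pdy_lin hΩ (hg.differentiableOn one_le)
          (hh.differentiableOn one_le) (hk.differentiableOn one_le)) b) hp)
    intro p hp
    rw [h1 hp]
    have hgb := contDiffOn_pdy (k := b) hΩ hg
    have hhb := contDiffOn_pdy (k := b) hΩ hh
    have hkb := contDiffOn_pdy (k := b) hΩ hk
    rw [ih hgb hhb hkb hp]
    simp [Function.iterate_succ_apply]


lemma pdx_iter_lin {Ω : Set (ℝ × ℝ)} (hΩ : IsOpen Ω) (c : ℂ) (b : ℕ) :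
    ∀ {g h k : ℝ × ℝ → ℂ}, ContDiffOn ℝ (b : ℕ) g Ω → ContDiffOn ℝ (b : ℕ) h Ω →
      ContDiffOn ℝ (b : ℕ) k Ω →
      Set.EqOn (pdx^[b] (fun q => g q + h q + c * k q))
        (fun q => pdx^[b] g q + pdx^[b] h q + c * pdx^[b] k q) Ω := by
  induction b with
  | zero => intro g h k _ _ _; simp [Set.EqOn]
  | succ b ih =>
    intro g h k hg hh hk
    have one_le : ((b : ℕ) + 1 : ℕ) ≠ (0 : WithTop ℕ∞) := by
      exact_mod_cast Nat.succ_ne_zero b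
    have h1 : Set.EqOn (pdx^[b + 1] (fun q => g q + h q + c * k q))
        (pdx^[b] (fun q => pdx g q + pdx h q + c * pdx k q)) Ω := by
      rw [Function.iterate_succ_apply]
      exact fun p hp => (congrFun (rfl : pdx^[b] (pdx fun q => g q + h q + c * k q) = _) p).trans
        ((pdx_iter_congr_on hΩ (pdx_lin hΩ (hg.differentiableOn one_le)
          (hh.differentiableOn one_le) (hk.differentiableOn one_le)) b) hp)
    intro p hp
    rw [h1 hp]
    have hgb := contDiffOn_pdx (k := b) hΩ hg
    have hhb := contDiffOn_pdx (k := b) hΩ hh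
    have hkb := contDiffOn_pdx (k := b) hΩ hk
    rw [ih hgb hhb hkb hp]
    simp [Function.iterate_succ_apply]


lemma key_pd {κ : ℝ} {M : ℕ} {Ω : Set (ℝ × ℝ)} (hΩ : IsOpen Ω) {u : ℝ × ℝ → ℂ}
    (hu : ContDiffOn ℝ (M + 1 : ℕ) u Ω) {xs ys : ℝ} (hmem : (xs, ys) ∈ Ω)
    (a b : ℕ) (hab : a + b + 2 ≤ M + 1) :
    pd u a (b + 2) xs ys = pd (helm κ u) a b xs ys - pd u (a + 2) b xs ys
      - (κ : ℂ) ^ 2 * pd u a b xs ys := by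
  set c : ℂ := (κ : ℂ) ^ 2 with hc
  set A : ℝ × ℝ → ℂ := pdx^[2] u with hA
  set B : ℝ × ℝ → ℂ := pdy^[2] u with hB
  set K : ℕ := a + b with hK
  have hle : ∀ {i j : ℕ}, i ≤ j → ((i : ℕ) : WithTop ℕ∞) ≤ ((j : ℕ) : WithTop ℕ∞) := by
    intro i j hij; exact_mod_cast hij
  have huK2 : ContDiffOn ℝ (2 + K : ℕ) u Ω := hu.of_le (hle (by omega))
  have hAK : ContDiffOn ℝ (K : ℕ) A Ω := contDiffOn_pdx_iter hΩ 2 K huK2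
  have hBK : ContDiffOn ℝ (K : ℕ) B Ω := contDiffOn_pdy_iter hΩ 2 K (by
    rw [show (2 + K) = 2 + K from rfl] at huK2; exact huK2)
  have huK : ContDiffOn ℝ (K : ℕ) u Ω := hu.of_le (hle (by omega))
  set w : ℝ × ℝ → ℂ := fun p => A p + B p + c * u p with hw
  have hEq : Set.EqOn (helm κ u) w Ω := by
    intro p hp
    have hp' : (p.1, p.2) ∈ Ω := by simpa using hp
    have e1 : pd u 2 0 p.1 p.2 = A p := by
      have := pd_eq hΩ hu 2 0 (by omega) p.1 p.2 hp'
      simpa [hA] using this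
    have e2 : pd u 0 2 p.1 p.2 = B p := by
      have := pd_eq hΩ hu 0 2 (by omega) p.1 p.2 hp'
      simpa [hB] using this
    show pd u 2 0 p.1 p.2 + pd u 0 2 p.1 p.2 + (κ : ℂ) ^ 2 * u p = _
    rw [e1, e2]
  have hwK : ContDiffOn ℝ (K : ℕ) w Ω := (hAK.add hBK).add (contDiffOn_const.mul huK)
  have hhelmK : ContDiffOn ℝ (K : ℕ) (helm κ u) Ω := hwK.congr hEq
  -- main computation
  have hAb : ContDiffOn ℝ (b : ℕ) A Ω := hAK.of_le (hle (by omega))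
  have hBb : ContDiffOn ℝ (b : ℕ) B Ω := hBK.of_le (hle (by omega))
  have hub : ContDiffOn ℝ (b : ℕ) u Ω := hu.of_le (hle (by omega))
  have hyA : ContDiffOn ℝ (a : ℕ) (pdy^[b] A) Ω := contDiffOn_pdy_iter hΩ b a (by
    rw [show (b + a) = K from by omega]; exact hAK)
  have hyB : ContDiffOn ℝ (a : ℕ) (pdy^[b] B) Ω := contDiffOn_pdy_iter hΩ b a (by
    rw [show (b + a) = K from by omega]; exact hBK)
  have hyu : ContDiffOn ℝ (a : ℕ) (pdy^[b] u) Ω := contDiffOn_pdy_iter hΩ b a (by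
    rw [show (b + a) = K from by omega]; exact huK)
  have main : pd (helm κ u) a b xs ys =
      pdx^[a] (pdy^[b] A) (xs, ys) + pdx^[a] (pdy^[b] B) (xs, ys)
        + c * pdx^[a] (pdy^[b] u) (xs, ys) := by
    rw [pd_eq hΩ hhelmK a b le_rfl xs ys hmem]
    have e1 : Set.EqOn (pdx^[a] (pdy^[b] (helm κ u))) (pdx^[a] (pdy^[b] w)) Ω :=
      pdx_iter_congr_on hΩ (pdy_iter_congr_on hΩ hEq b) a
    rw [e1 hmem]
    have e2 : Set.EqOn (pdy^[b] w)
        (fun q => pdy^[b] A q + pdy^[b] B q + c * pdy^[b] u q) Ω :=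
      pdy_iter_lin hΩ c b hAb hBb hub
    have e3 := pdx_iter_congr_on hΩ e2 a
    rw [e3 hmem]
    exact pdx_iter_lin hΩ c a hyA hyB hyu hmem
  -- identify the three terms
  have t3 : pdx^[a] (pdy^[b] u) (xs, ys) = pd u a b xs ys :=
    (pd_eq hΩ hu a b (by omega) xs ys hmem).symm
  have t2 : pdx^[a] (pdy^[b] B) (xs, ys) = pd u a (b + 2) xs ys := by
    have : pdy^[b] B = pdy^[b + 2] u := by
      rw [hB]; exact (Function.iterate_add_apply pdy b 2 u).symm
    rw [this]
    exact (pd_eq hΩ hu a (b + 2) (by omega) xs ys hmem).symm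
  have t1 : pdx^[a] (pdy^[b] A) (xs, ys) = pd u (a + 2) b xs ys := by
    have hpdxu : ContDiffOn ℝ (b + 1 : ℕ) (pdx u) Ω := by
      have : ContDiffOn ℝ (1 + (b + 1) : ℕ) u Ω := hu.of_le (hle (by omega))
      simpa using contDiffOn_pdx_iter hΩ 1 (b + 1) this
    have hub1 : ContDiffOn ℝ (b + 1 : ℕ) u Ω := hu.of_le (hle (by omega))
    have s1 : Set.EqOn (pdy^[b] A) (pdx (pdy^[b] (pdx u))) Ω := by
      have : A = pdx (pdx u) := rfl
      rw [this]
      exact swap_iter hΩ b hpdxu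
    have s2 : Set.EqOn (pdx (pdy^[b] (pdx u))) (pdx (pdx (pdy^[b] u))) Ω :=
      pdx_congr_on hΩ (swap_iter hΩ b hub1)
    have e4 : Set.EqOn (pdx^[a] (pdy^[b] A)) (pdx^[a] (pdx (pdx (pdy^[b] u)))) Ω :=
      pdx_iter_congr_on hΩ (fun p hp => (s1 hp).trans (s2 hp)) a
    rw [e4 hmem]
    have : pdx^[a] (pdx (pdx (pdy^[b] u))) = pdx^[a + 2] (pdy^[b] u) := by
      exact (Function.iterate_add_apply pdx a 2 (pdy^[b] u)).symm
    rw [this]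
    exact (pd_eq hΩ hu (a + 2) b (by omega) xs ys hmem).symm
  rw [main, t1, t2, t3]
  ring


/-- binomial reindex lemma -/
lemma binom_reindex (k : ℕ) (Y : ℕ → ℂ) :
    ∑ q ∈ Finset.range (k + 2), ((k + 1).choose q : ℂ) * Y q =
      ∑ q ∈ Finset.range (k + 1), (k.choose q : ℂ) * Y q
        + ∑ q ∈ Finset.range (k + 1), (k.choose q : ℂ) * Y (q + 1) := by
  rw [Finset.sum_range_succ' (fun q => ((k + 1).choose q : ℂ) * Y q) (k + 1)]
  have h1 : ∀ q, (((k + 1).choose (q + 1) : ℕ) : ℂ) = (k.choose q : ℂ) + (k.choose (q + 1) : ℂ) := by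
    intro q; rw [Nat.choose_succ_succ]; push_cast; ring
  have h2 : ∑ q ∈ Finset.range (k + 1), ((k + 1).choose (q + 1) : ℂ) * Y (q + 1) =
      ∑ q ∈ Finset.range (k + 1), (k.choose q : ℂ) * Y (q + 1)
        + ∑ q ∈ Finset.range (k + 1), (k.choose (q + 1) : ℂ) * Y (q + 1) := by
    rw [← Finset.sum_add_distrib]
    refine Finset.sum_congr rfl fun q _ => ?_
    rw [h1]; ring
  rw [h2]
  have h3 : ∑ q ∈ Finset.range (k + 1), (k.choose (q + 1) : ℂ) * Y (q + 1)
      + ((k + 1).choose 0 : ℂ) * Y 0 = ∑ q ∈ Finset.range (k + 1), (k.choose q : ℂ) * Y q := by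
    have := Finset.sum_range_succ' (fun q => (k.choose q : ℂ) * Y q) (k + 1)
    rw [Finset.sum_range_succ (fun q => (k.choose q : ℂ) * Y q) (k + 1)] at this
    simp only [Nat.choose_succ_self, Nat.cast_zero, zero_mul, add_zero] at this
    simpa using this.symm
  rw [Nat.choose_zero_right] at h3 ⊢
  linear_combination h3

lemma sum_Icc_one (t : ℕ) (f : ℕ → ℂ) :
    ∑ q ∈ Finset.Icc 1 t, f q = ∑ i ∈ Finset.range t, f (i + 1) := by
  induction t with
  | zero => simp
  | succ t ih => rw [Finset.sum_Icc_succ_top (by omega), ih, Finset.sum_range_succ]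

noncomputable def exgen (κ : ℂ) (U F : ℕ → ℕ → ℂ) (m n : ℕ) : ℂ :=
  (-1 : ℂ) ^ (n / 2) * ∑ q ∈ Finset.range (n / 2 + 1),
      ((n / 2).choose q : ℂ) * κ ^ (2 * q) * U (2 * (n / 2) + m - 2 * q) (n % 2)
  + ∑ q ∈ Finset.Icc 1 (n / 2), ∑ j ∈ Finset.range q,
      (-1 : ℂ) ^ (q - 1) * ((q - 1).choose j : ℂ) * κ ^ (2 * (q - j - 1)) *
        F (m + 2 * j) (n - 2 * q)

lemma step_alg (κ : ℂ) (U F : ℕ → ℕ → ℂ) (m n : ℕ) :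
    F m n - exgen κ U F (m + 2) n - κ ^ 2 * exgen κ U F m n = exgen κ U F m (n + 2) := by
  have hdiv : (n + 2) / 2 = n / 2 + 1 := Nat.add_div_right n (by norm_num)
  have hmod : (n + 2) % 2 = n % 2 := Nat.add_mod_right n 2
  set k := n / 2 with hk
  set r := n % 2 with hr
  -- U part
  have Upart : (-1 : ℂ) ^ (k + 1) * ∑ q ∈ Finset.range (k + 1 + 1),
        ((k + 1).choose q : ℂ) * κ ^ (2 * q) * U (2 * (k + 1) + m - 2 * q) r
      = -((-1 : ℂ) ^ k * ∑ q ∈ Finset.range (k + 1),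
            (k.choose q : ℂ) * κ ^ (2 * q) * U (2 * k + (m + 2) - 2 * q) r)
        - κ ^ 2 * ((-1 : ℂ) ^ k * ∑ q ∈ Finset.range (k + 1),
            (k.choose q : ℂ) * κ ^ (2 * q) * U (2 * k + m - 2 * q) r) := by
    have hY := binom_reindex k (fun q => κ ^ (2 * q) * U (2 * (k + 1) + m - 2 * q) r)
    have e0 : ∑ q ∈ Finset.range (k + 1 + 1),
        ((k + 1).choose q : ℂ) * κ ^ (2 * q) * U (2 * (k + 1) + m - 2 * q) r
        = ∑ q ∈ Finset.range (k + 2),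
        ((k + 1).choose q : ℂ) * (κ ^ (2 * q) * U (2 * (k + 1) + m - 2 * q) r) := by
      refine Finset.sum_congr (by norm_num) fun q _ => by ring
    have e1 : ∑ q ∈ Finset.range (k + 1),
        (k.choose q : ℂ) * (κ ^ (2 * q) * U (2 * (k + 1) + m - 2 * q) r)
        = ∑ q ∈ Finset.range (k + 1),
        (k.choose q : ℂ) * κ ^ (2 * q) * U (2 * k + (m + 2) - 2 * q) r := by
      refine Finset.sum_congr rfl fun q hq => ?_
      have hq' := Finset.mem_range.mp hq
      rw [show 2 * (k + 1) + m - 2 * q = 2 * k + (m + 2) - 2 * q from by omega]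
      ring
    have e2 : ∑ q ∈ Finset.range (k + 1),
        (k.choose q : ℂ) * (κ ^ (2 * (q + 1)) * U (2 * (k + 1) + m - 2 * (q + 1)) r)
        = ∑ q ∈ Finset.range (k + 1),
        κ ^ 2 * ((k.choose q : ℂ) * κ ^ (2 * q) * U (2 * k + m - 2 * q) r) := by
      refine Finset.sum_congr rfl fun q hq => ?_
      have hq' := Finset.mem_range.mp hq
      rw [show 2 * (k + 1) + m - 2 * (q + 1) = 2 * k + m - 2 * q from by omega,
        show 2 * (q + 1) = 2 * q + 2 from by ring, pow_add]
      ring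
    rw [e0, hY, e1, e2, ← Finset.mul_sum]
    ring
  -- F part
  have Fpart : (∑ q ∈ Finset.Icc 1 (k + 1), ∑ j ∈ Finset.range q,
        (-1 : ℂ) ^ (q - 1) * ((q - 1).choose j : ℂ) * κ ^ (2 * (q - j - 1)) *
          F (m + 2 * j) (n + 2 - 2 * q))
      = F m n
        - (∑ q ∈ Finset.Icc 1 k, ∑ j ∈ Finset.range q,
            (-1 : ℂ) ^ (q - 1) * ((q - 1).choose j : ℂ) * κ ^ (2 * (q - j - 1)) *
              F (m + 2 + 2 * j) (n - 2 * q))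
        - κ ^ 2 * (∑ q ∈ Finset.Icc 1 k, ∑ j ∈ Finset.range q,
            (-1 : ℂ) ^ (q - 1) * ((q - 1).choose j : ℂ) * κ ^ (2 * (q - j - 1)) *
              F (m + 2 * j) (n - 2 * q)) := by
    rw [sum_Icc_one (k + 1), sum_Icc_one k, sum_Icc_one k, Finset.sum_range_succ']
    have g0 : (∑ j ∈ Finset.range (0 + 1),
        (-1 : ℂ) ^ (0 + 1 - 1) * ((0 + 1 - 1).choose j : ℂ) * κ ^ (2 * (0 + 1 - j - 1)) *
          F (m + 2 * j) (n + 2 - 2 * (0 + 1))) = F m n := by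
      simp
    rw [g0]
    have gstep : ∀ i ∈ Finset.range k,
        (∑ j ∈ Finset.range (i + 1 + 1),
          (-1 : ℂ) ^ (i + 1 + 1 - 1) * ((i + 1 + 1 - 1).choose j : ℂ) *
            κ ^ (2 * (i + 1 + 1 - j - 1)) * F (m + 2 * j) (n + 2 - 2 * (i + 1 + 1)))
        = -(∑ j ∈ Finset.range (i + 1),
            (-1 : ℂ) ^ (i + 1 - 1) * ((i + 1 - 1).choose j : ℂ) * κ ^ (2 * (i + 1 - j - 1)) *
              F (m + 2 + 2 * j) (n - 2 * (i + 1)))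
          - κ ^ 2 * (∑ j ∈ Finset.range (i + 1),
            (-1 : ℂ) ^ (i + 1 - 1) * ((i + 1 - 1).choose j : ℂ) * κ ^ (2 * (i + 1 - j - 1)) *
              F (m + 2 * j) (n - 2 * (i + 1))) := by
      intro i _
      have hY := binom_reindex i (fun j => κ ^ (2 * (i + 1 - j)) * F (m + 2 * j) (n - 2 - 2 * i))
      have e0 : (∑ j ∈ Finset.range (i + 1 + 1),
          (-1 : ℂ) ^ (i + 1 + 1 - 1) * ((i + 1 + 1 - 1).choose j : ℂ) *
            κ ^ (2 * (i + 1 + 1 - j - 1)) * F (m + 2 * j) (n + 2 - 2 * (i + 1 + 1)))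
          = (-1 : ℂ) ^ (i + 1) * ∑ j ∈ Finset.range (i + 2),
            ((i + 1).choose j : ℂ) * (κ ^ (2 * (i + 1 - j)) * F (m + 2 * j) (n - 2 - 2 * i)) := by
        rw [Finset.mul_sum]
        refine Finset.sum_congr (by norm_num) fun j hj => ?_
        have hj' := Finset.mem_range.mp hj
        rw [show i + 1 + 1 - 1 = i + 1 from by omega,
          show i + 1 + 1 - j - 1 = i + 1 - j from by omega,
          show n + 2 - 2 * (i + 1 + 1) = n - 2 - 2 * i from by omega]
        ring
      have e1 : ∑ j ∈ Finset.range (i + 1),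
          ((i.choose j : ℂ)) * (κ ^ (2 * (i + 1 - j)) * F (m + 2 * j) (n - 2 - 2 * i))
          = ∑ j ∈ Finset.range (i + 1),
          κ ^ 2 * ((i.choose j : ℂ) * κ ^ (2 * (i - j)) * F (m + 2 * j) (n - 2 - 2 * i)) := by
        refine Finset.sum_congr rfl fun j hj => ?_
        have hj' := Finset.mem_range.mp hj
        rw [show 2 * (i + 1 - j) = 2 * (i - j) + 2 from by omega, pow_add]
        ring
      have e2 : ∑ j ∈ Finset.range (i + 1),
          ((i.choose j : ℂ)) * (κ ^ (2 * (i + 1 - (j + 1))) * F (m + 2 * (j + 1)) (n - 2 - 2 * i))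
          = ∑ j ∈ Finset.range (i + 1),
          ((i.choose j : ℂ)) * κ ^ (2 * (i - j)) * F (m + 2 + 2 * j) (n - 2 - 2 * i) := by
        refine Finset.sum_congr rfl fun j hj => ?_
        have hj' := Finset.mem_range.mp hj
        rw [show i + 1 - (j + 1) = i - j from by omega,
          show m + 2 * (j + 1) = m + 2 + 2 * j from by omega]
        ring
      have e3a : (∑ j ∈ Finset.range (i + 1),
          (-1 : ℂ) ^ (i + 1 - 1) * ((i + 1 - 1).choose j : ℂ) * κ ^ (2 * (i + 1 - j - 1)) *
            F (m + 2 + 2 * j) (n - 2 * (i + 1)))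
          = (-1 : ℂ) ^ i * ∑ j ∈ Finset.range (i + 1),
            ((i.choose j : ℂ)) * κ ^ (2 * (i - j)) * F (m + 2 + 2 * j) (n - 2 - 2 * i) := by
        rw [Finset.mul_sum]
        refine Finset.sum_congr rfl fun j hj => ?_
        have hj' := Finset.mem_range.mp hj
        rw [show i + 1 - 1 = i from by omega, show i + 1 - j - 1 = i - j from by omega,
          show n - 2 * (i + 1) = n - 2 - 2 * i from by omega]
        ring
      have e3b : (∑ j ∈ Finset.range (i + 1),
          (-1 : ℂ) ^ (i + 1 - 1) * ((i + 1 - 1).choose j : ℂ) * κ ^ (2 * (i + 1 - j - 1)) *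
            F (m + 2 * j) (n - 2 * (i + 1)))
          = (-1 : ℂ) ^ i * ∑ j ∈ Finset.range (i + 1),
            ((i.choose j : ℂ)) * κ ^ (2 * (i - j)) * F (m + 2 * j) (n - 2 - 2 * i) := by
        rw [Finset.mul_sum]
        refine Finset.sum_congr rfl fun j hj => ?_
        have hj' := Finset.mem_range.mp hj
        rw [show i + 1 - 1 = i from by omega, show i + 1 - j - 1 = i - j from by omega,
          show n - 2 * (i + 1) = n - 2 - 2 * i from by omega]
        ring
      rw [e0, hY, e1, ← Finset.mul_sum, e2, e3a, e3b]
      ring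
    rw [Finset.sum_congr rfl gstep]
    rw [Finset.sum_sub_distrib, Finset.sum_neg_distrib, ← Finset.mul_sum]
    ring
  simp only [exgen, hdiv, hmod]
  rw [Upart, Fpart]
  ring

lemma main_ind {κ : ℝ} {M : ℕ} {Ω : Set (ℝ × ℝ)} (hΩ : IsOpen Ω) {u : ℝ × ℝ → ℂ}
    (hu : ContDiffOn ℝ (M + 1 : ℕ) u Ω) {xs ys : ℝ} (hmem : (xs, ys) ∈ Ω) :
    ∀ n m : ℕ, m + n ≤ M + 1 →
      pd u m n xs ys = exgen (κ : ℂ) (fun a b => pd u a b xs ys)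
        (fun a b => pd (helm κ u) a b xs ys) m n := by
  intro n
  induction n using Nat.strong_induction_on with
  | _ n ih =>
    match n with
    | 0 =>
      intro m _
      simp [exgen]
    | 1 =>
      intro m _
      simp [exgen]
    | (n + 2) =>
      intro m hm
      have hkey := key_pd (κ := κ) hΩ hu hmem m n (by omega)
      rw [hkey, ih n (by omega) (m + 2) (by omega), ih n (by omega) m (by omega)]
      exact step_alg (κ : ℂ) (fun a b => pd u a b xs ys)
        (fun a b => pd (helm κ u) a b xs ys) m n

/-- dependence of `u^{(m,n)}` for `(n,m) ∈ Λ_{M+1}^2` on lower-order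
`y`-derivatives, via the Helmholtz equation `Δu + κ²u = f`. -/
theorem statement1 (κ : ℝ) (M : ℕ) (Ω : Set (ℝ × ℝ)) (hΩ : IsOpen Ω)
    (xs ys : ℝ) (hmem : (xs, ys) ∈ Ω) (u : ℝ × ℝ → ℂ)
    (hu : ContDiffOn ℝ ((M : ℕ∞) + 1) u Ω) :
    ∀ m n : ℕ, (n, m) ∈ Lam2 (M + 1) →
      pd u m n xs ys =
        (-1 : ℂ) ^ (n / 2) *
            ∑ q ∈ Finset.range (n / 2 + 1),
              (Nat.choose (n / 2) q : ℂ) * (κ : ℂ) ^ (2 * q) *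
                pd u (2 * (n / 2) + m - 2 * q) (n % 2) xs ys
        + ∑ q ∈ Finset.Icc 1 (n / 2), ∑ j ∈ Finset.range q,
            (-1 : ℂ) ^ (q - 1) * (Nat.choose (q - 1) j : ℂ) *
              (κ : ℂ) ^ (2 * (q - j - 1)) *
                pd (helm κ u) (m + 2 * j) (n - 2 * q) xs ys := by
  intro m n hmn
  have hnm : 2 ≤ n ∧ n + m ≤ M + 1 := by
    simp only [Lam2, Lam, Finset.mem_filter, Finset.mem_product, Finset.mem_range] at hmn
    exact ⟨hmn.2, hmn.1.2⟩
  have hu' : ContDiffOn ℝ (M + 1 : ℕ) u Ω := by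
    have : ((M : ℕ∞) + 1 : WithTop ℕ∞) = ((M + 1 : ℕ) : WithTop ℕ∞) := by push_cast; ring
    rwa [this] at hu
  have := main_ind (κ := κ) hΩ hu' hmem n m (by omega)
  simpa only [exgen] using this
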